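/- Let φ be continuous on a compact interval [a,b] and r>0, with E_r = {t ∈ [a,b] : r/2 ≤ |φ(t)| ≤ r} nonempty. Then the collection {I_t : t ∈ E_r} (as defined in the context) is a finite set of pairwise disjoint intervals covering E_r. -/

import Mathlib

open Set Classical

/-- The "stopping set" to the left of `t`: points of `[a,t]` where `|φ|` leaves `(r/4, 2r)`. -/
def badL (φ : ℝ → ℝ) (a r t : ℝ) : Set ℝ :=
  {s ∈ Set.Icc a t | |φ s| ≤ r / 4 ∨ 2 * r ≤ |φ s|}

/-- The "stopping set" to the right of `t`. -/
def badR (φ : ℝ → ℝ) (b r t : ℝ) : Set ℝ :=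
  {s ∈ Set.Icc t b | |φ s| ≤ r / 4 ∨ 2 * r ≤ |φ s|}

/-- `a_t`: the supremum of the left stopping set, or `a` if it is empty. -/
noncomputable def leftStop (φ : ℝ → ℝ) (a r t : ℝ) : ℝ :=
  if (badL φ a r t).Nonempty then sSup (badL φ a r t) else a

/-- `b_t`: the infimum of the right stopping set, or `b` if it is empty. -/
noncomputable def rightStop (φ : ℝ → ℝ) (b r t : ℝ) : ℝ :=
  if (badR φ b r t).Nonempty then sInf (badR φ b r t) else b

/-- The interval `I_t = (a_t, b_t)`, closed at an endpoint when that endpoint equals `a`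
(resp. `b`). -/
noncomputable def It (φ : ℝ → ℝ) (a b r t : ℝ) : Set ℝ :=
  {s : ℝ |
    (if leftStop φ a r t = a then leftStop φ a r t ≤ s else leftStop φ a r t < s) ∧
    (if rightStop φ b r t = b then s ≤ rightStop φ b r t else s < rightStop φ b r t)}

/-- `E_r = {t ∈ [a,b] : r/2 ≤ |φ(t)| ≤ r}`. -/
def Er (φ : ℝ → ℝ) (a b r : ℝ) : Set ℝ :=
  {t ∈ Set.Icc a b | r / 2 ≤ |φ t| ∧ |φ t| ≤ r}

/-- `N(r; φ)`: the number of distinct intervals `I_t`, `t ∈ E_r`. -/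
noncomputable def Ncount (φ : ℝ → ℝ) (a b r : ℝ) : ℕ :=
  (It φ a b r '' Er φ a b r).ncard

section Aux

variable {φ : ℝ → ℝ} {a b r t : ℝ}

lemma badL_bddAbove : BddAbove (badL φ a r t) :=
  BddAbove.mono (fun s hs => hs.1) bddAbove_Icc

lemma badR_bddBelow : BddBelow (badR φ b r t) :=
  BddBelow.mono (fun s hs => hs.1) bddBelow_Icc

lemma badL_isClosed (hφ : ContinuousOn φ (Set.Icc a b)) (ht : t ∈ Set.Icc a b) :
    IsClosed (badL φ a r t) := by
  have heq : badL φ a r t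
      = Set.Icc a t ∩ (fun s => |φ s|) ⁻¹' (Set.Iic (r / 4) ∪ Set.Ici (2 * r)) := by
    ext s
    simp only [badL, Set.mem_setOf_eq, Set.mem_inter_iff, Set.mem_preimage, Set.mem_union,
      Set.mem_Iic, Set.mem_Ici]
  rw [heq]
  exact ContinuousOn.preimage_isClosed_of_isClosed
    ((hφ.mono (Set.Icc_subset_Icc le_rfl ht.2)).abs) isClosed_Icc
    (isClosed_Iic.union isClosed_Ici)

lemma badR_isClosed (hφ : ContinuousOn φ (Set.Icc a b)) (ht : t ∈ Set.Icc a b) :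
    IsClosed (badR φ b r t) := by
  have heq : badR φ b r t
      = Set.Icc t b ∩ (fun s => |φ s|) ⁻¹' (Set.Iic (r / 4) ∪ Set.Ici (2 * r)) := by
    ext s
    simp only [badR, Set.mem_setOf_eq, Set.mem_inter_iff, Set.mem_preimage, Set.mem_union,
      Set.mem_Iic, Set.mem_Ici]
  rw [heq]
  exact ContinuousOn.preimage_isClosed_of_isClosed
    ((hφ.mono (Set.Icc_subset_Icc ht.1 le_rfl)).abs) isClosed_Icc
    (isClosed_Iic.union isClosed_Ici)

lemma leftStop_mem_badL (hφ : ContinuousOn φ (Set.Icc a b)) (ht : t ∈ Set.Icc a b)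
    (h : (badL φ a r t).Nonempty) : leftStop φ a r t ∈ badL φ a r t := by
  rw [leftStop, if_pos h]
  exact (badL_isClosed hφ ht).csSup_mem h badL_bddAbove

lemma rightStop_mem_badR (hφ : ContinuousOn φ (Set.Icc a b)) (ht : t ∈ Set.Icc a b)
    (h : (badR φ b r t).Nonempty) : rightStop φ b r t ∈ badR φ b r t := by
  rw [rightStop, if_pos h]
  exact (badR_isClosed hφ ht).csInf_mem h badR_bddBelow

lemma leftStop_mem_Icc (hφ : ContinuousOn φ (Set.Icc a b)) (ht : t ∈ Set.Icc a b) :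
    leftStop φ a r t ∈ Set.Icc a t := by
  by_cases h : (badL φ a r t).Nonempty
  · exact (leftStop_mem_badL hφ ht h).1
  · rw [leftStop, if_neg h]; exact ⟨le_rfl, ht.1⟩

lemma rightStop_mem_Icc (hφ : ContinuousOn φ (Set.Icc a b)) (ht : t ∈ Set.Icc a b) :
    rightStop φ b r t ∈ Set.Icc t b := by
  by_cases h : (badR φ b r t).Nonempty
  · exact (rightStop_mem_badR hφ ht h).1
  · rw [rightStop, if_neg h]; exact ⟨ht.2, le_rfl⟩

/-- No bad point lies strictly between the stops of `t`. -/
lemma not_bad_between (hφ : ContinuousOn φ (Set.Icc a b)) (ht : t ∈ Er φ a b r) {u : ℝ}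
    (hbad : |φ u| ≤ r / 4 ∨ 2 * r ≤ |φ u|) (h1 : leftStop φ a r t < u)
    (h2 : u < rightStop φ b r t) : False := by
  obtain ⟨htab, -, -⟩ := ht
  have hL := leftStop_mem_Icc (r := r) hφ htab
  have hR := rightStop_mem_Icc (r := r) hφ htab
  rcases le_total u t with hut | htu
  · have hmem : u ∈ badL φ a r t := ⟨⟨le_trans hL.1 h1.le, hut⟩, hbad⟩
    have hne : (badL φ a r t).Nonempty := ⟨u, hmem⟩
    have hle : u ≤ leftStop φ a r t := by
      rw [leftStop, if_pos hne]
      exact le_csSup badL_bddAbove hmem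
    linarith
  · have hmem : u ∈ badR φ b r t := ⟨⟨htu, le_trans h2.le hR.2⟩, hbad⟩
    have hne : (badR φ b r t).Nonempty := ⟨u, hmem⟩
    have hle : rightStop φ b r t ≤ u := by
      rw [rightStop, if_pos hne]
      exact csInf_le badR_bddBelow hmem
    linarith

lemma t_mem_It (hr : 0 < r) (hφ : ContinuousOn φ (Set.Icc a b)) (ht : t ∈ Er φ a b r) :
    t ∈ It φ a b r t := by
  obtain ⟨htab, hφ1, hφ2⟩ := ht
  have hnotbad : ¬(|φ t| ≤ r / 4 ∨ 2 * r ≤ |φ t|) := by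
    rintro (h | h) <;> linarith
  constructor
  · split_ifs with h
    · rw [h]; exact htab.1
    · rcases (leftStop_mem_Icc (r := r) hφ htab).2.lt_or_eq with h' | h'
      · exact h'
      · exfalso
        by_cases hne : (badL φ a r t).Nonempty
        · have hmem := leftStop_mem_badL hφ htab hne
          rw [h'] at hmem
          exact hnotbad hmem.2
        · exact h (by rw [leftStop, if_neg hne])
  · split_ifs with h
    · rw [h]; exact htab.2
    · rcases (rightStop_mem_Icc (r := r) hφ htab).1.lt_or_eq with h' | h'
      · exact h'
      · exfalso
        by_cases hne : (badR φ b r t).Nonempty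
        · have hmem := rightStop_mem_badR hφ htab hne
          rw [← h'] at hmem
          exact hnotbad hmem.2
        · exact h (by rw [rightStop, if_neg hne])

lemma Ioo_subset_It :
    Set.Ioo (leftStop φ a r t) (rightStop φ b r t) ⊆ It φ a b r t := by
  intro s hs
  constructor
  · split_ifs with h
    exacts [hs.1.le, hs.1]
  · split_ifs with h
    exacts [hs.2.le, hs.2]

lemma leftStop_le_of_inter (hφ : ContinuousOn φ (Set.Icc a b)) {t₁ t₂ s : ℝ}
    (ht₁ : t₁ ∈ Er φ a b r) (ht₂ : t₂ ∈ Er φ a b r)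
    (hs₁ : s ∈ It φ a b r t₁) (hs₂ : s ∈ It φ a b r t₂) :
    leftStop φ a r t₂ ≤ leftStop φ a r t₁ := by
  by_contra hcon
  push_neg at hcon
  have hL1a : a ≤ leftStop φ a r t₁ := (leftStop_mem_Icc (r := r) hφ ht₁.1).1
  have hL2ne : leftStop φ a r t₂ ≠ a := ne_of_gt (lt_of_le_of_lt hL1a hcon)
  have hne : (badL φ a r t₂).Nonempty := by
    by_contra hne
    exact hL2ne (by rw [leftStop, if_neg hne])
  have hbad := (leftStop_mem_badL hφ ht₂.1 hne).2
  have hL2s : leftStop φ a r t₂ < s := by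
    have h := hs₂.1
    rwa [if_neg hL2ne] at h
  have hsR : s ≤ rightStop φ b r t₁ := by
    have h := hs₁.2
    split_ifs at h
    exacts [h, h.le]
  exact not_bad_between hφ ht₁ hbad hcon (lt_of_lt_of_le hL2s hsR)

lemma rightStop_le_of_inter (hφ : ContinuousOn φ (Set.Icc a b)) {t₁ t₂ s : ℝ}
    (ht₁ : t₁ ∈ Er φ a b r) (ht₂ : t₂ ∈ Er φ a b r)
    (hs₁ : s ∈ It φ a b r t₁) (hs₂ : s ∈ It φ a b r t₂) :
    rightStop φ b r t₁ ≤ rightStop φ b r t₂ := by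
  by_contra hcon
  push_neg at hcon
  have hR1b : rightStop φ b r t₁ ≤ b := (rightStop_mem_Icc (r := r) hφ ht₁.1).2
  have hR2ne : rightStop φ b r t₂ ≠ b := ne_of_lt (lt_of_lt_of_le hcon hR1b)
  have hne : (badR φ b r t₂).Nonempty := by
    by_contra hne
    exact hR2ne (by rw [rightStop, if_neg hne])
  have hbad := (rightStop_mem_badR hφ ht₂.1 hne).2
  have hsR2 : s < rightStop φ b r t₂ := by
    have h := hs₂.2
    rwa [if_neg hR2ne] at h
  have hLs : leftStop φ a r t₁ ≤ s := by
    have h := hs₁.1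
    split_ifs at h
    exacts [h, h.le]
  exact not_bad_between hφ ht₁ hbad (lt_of_le_of_lt hLs hsR2) hcon

lemma stops_eq_of_inter (hφ : ContinuousOn φ (Set.Icc a b)) {t₁ t₂ s : ℝ}
    (ht₁ : t₁ ∈ Er φ a b r) (ht₂ : t₂ ∈ Er φ a b r)
    (hs₁ : s ∈ It φ a b r t₁) (hs₂ : s ∈ It φ a b r t₂) :
    leftStop φ a r t₁ = leftStop φ a r t₂ ∧ rightStop φ b r t₁ = rightStop φ b r t₂ :=
  ⟨le_antisymm (leftStop_le_of_inter hφ ht₂ ht₁ hs₂ hs₁)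
      (leftStop_le_of_inter hφ ht₁ ht₂ hs₁ hs₂),
    le_antisymm (rightStop_le_of_inter hφ ht₁ ht₂ hs₁ hs₂)
      (rightStop_le_of_inter hφ ht₂ ht₁ hs₂ hs₁)⟩

lemma It_eq_of_inter (hφ : ContinuousOn φ (Set.Icc a b)) {t₁ t₂ s : ℝ}
    (ht₁ : t₁ ∈ Er φ a b r) (ht₂ : t₂ ∈ Er φ a b r)
    (hs₁ : s ∈ It φ a b r t₁) (hs₂ : s ∈ It φ a b r t₂) :
    It φ a b r t₁ = It φ a b r t₂ := by
  obtain ⟨hL, hR⟩ := stops_eq_of_inter hφ ht₁ ht₂ hs₁ hs₂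
  unfold It
  rw [hL, hR]

end Aux

/-- if `E_r ≠ ∅`, the collection `{I_t : t ∈ E_r}` is a finite set of pairwise
disjoint intervals covering `E_r`. -/
theorem It_family_finite_disjoint_cover (a b r : ℝ) (hab : a ≤ b) (hr : 0 < r) (φ : ℝ → ℝ)
    (hφ : ContinuousOn φ (Set.Icc a b)) (hE : (Er φ a b r).Nonempty) :
    (It φ a b r '' Er φ a b r).Finite ∧
    (∀ t₁ ∈ Er φ a b r, ∀ t₂ ∈ Er φ a b r,
      It φ a b r t₁ = It φ a b r t₂ ∨ It φ a b r t₁ ∩ It φ a b r t₂ = ∅) ∧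
    Er φ a b r ⊆ ⋃ t ∈ Er φ a b r, It φ a b r t := by
  refine ⟨?_, ?_, ?_⟩
  · -- finiteness
    rcases eq_or_lt_of_le hab with rfl | hab'
    · -- degenerate case a = b
      have hsub : Er φ a a r ⊆ {a} := by
        intro t ht
        have h := ht.1
        rw [Set.Icc_self] at h
        exact h
      exact (((Set.finite_singleton a).subset hsub).image _)
    · -- a < b : uniform continuity gives a lower bound on interval lengths
      have hK : UniformContinuousOn φ (Set.Icc a b) :=
        isCompact_Icc.uniformContinuousOn_of_continuous hφ
      rw [Metric.uniformContinuousOn_iff] at hK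
      obtain ⟨δ, hδ, hK⟩ := hK (r / 4) (by linarith)
      set ε0 : ℝ := min δ (b - a) with hε0
      have hε0pos : 0 < ε0 := lt_min hδ (by linarith)
      -- any bad point is at distance at least δ from a point of Er
      have far : ∀ t ∈ Er φ a b r, ∀ u ∈ Set.Icc a b,
          (|φ u| ≤ r / 4 ∨ 2 * r ≤ |φ u|) → δ ≤ |u - t| := by
        intro t ht u hu hbad
        by_contra hc
        push_neg at hc
        have hd := hK u hu t ht.1 (by rwa [Real.dist_eq])
        rw [Real.dist_eq] at hd
        have h1 := abs_abs_sub_abs_le_abs_sub (φ u) (φ t)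
        have h2 := lt_of_le_of_lt h1 hd
        rw [abs_lt] at h2
        obtain ⟨-, hφ1, hφ2⟩ := ht
        rcases hbad with hb | hb <;> linarith
      -- each interval has length at least ε0
      have hlen : ∀ t ∈ Er φ a b r, ε0 ≤ rightStop φ b r t - leftStop φ a r t := by
        intro t ht
        have htab := ht.1
        have hL := leftStop_mem_Icc (r := r) hφ htab
        have hR := rightStop_mem_Icc (r := r) hφ htab
        by_cases hneR : (badR φ b r t).Nonempty
        · have hRmem := rightStop_mem_badR hφ htab hneR
          have hfar := far t ht _ ⟨le_trans htab.1 hRmem.1.1, hRmem.1.2⟩ hRmem.2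
          rw [abs_of_nonneg (by linarith [hRmem.1.1])] at hfar
          have := min_le_left δ (b - a)
          linarith [hL.2]
        · by_cases hneL : (badL φ a r t).Nonempty
          · have hLmem := leftStop_mem_badL hφ htab hneL
            have hfar := far t ht _ ⟨hLmem.1.1, le_trans hLmem.1.2 htab.2⟩ hLmem.2
            rw [abs_of_nonpos (by linarith [hLmem.1.2]), neg_sub] at hfar
            have := min_le_left δ (b - a)
            linarith [hR.1]
          · rw [leftStop, if_neg hneL, rightStop, if_neg hneR]
            exact min_le_right δ (b - a)
      -- set of intervals
      set S : Set (Set ℝ) := It φ a b r '' Er φ a b r with hS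
      have hchoice : ∀ I : ↥S, ∃ u, u ∈ Er φ a b r ∧ It φ a b r u = ↑I :=
        fun I => (Set.mem_image _ _ _).mp I.2
      choose tt htt hIt using hchoice
      set As : ↥S → Set ℝ :=
        fun I => Set.Ioo (leftStop φ a r (tt I)) (rightStop φ b r (tt I)) with hAs
      have hmble : ∀ I, MeasurableSet (As I) := fun I => measurableSet_Ioo
      have hdisj : Pairwise (Function.onFun Disjoint As) := by
        intro I J hIJ
        rw [Function.onFun, Set.disjoint_left]
        intro s hsI hsJ
        have h1 : s ∈ It φ a b r (tt I) := Ioo_subset_It hsI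
        have h2 : s ∈ It φ a b r (tt J) := Ioo_subset_It hsJ
        have heq : It φ a b r (tt I) = It φ a b r (tt J) :=
          It_eq_of_inter hφ (htt I) (htt J) h1 h2
        exact hIJ (Subtype.ext (by rw [← hIt I, ← hIt J, heq]))
      have hunion : MeasureTheory.volume (⋃ I, As I) ≠ ⊤ := by
        have hsub : (⋃ I, As I) ⊆ Set.Icc a b := by
          refine Set.iUnion_subset fun I => ?_
          refine subset_trans Set.Ioo_subset_Icc_self (Set.Icc_subset_Icc ?_ ?_)
          · exact (leftStop_mem_Icc (r := r) hφ (htt I).1).1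
          · exact (rightStop_mem_Icc (r := r) hφ (htt I).1).2
        have hle := MeasureTheory.measure_mono (μ := MeasureTheory.volume) hsub
        exact ne_top_of_le_ne_top (by simp [Real.volume_Icc]) hle
      have hfin := MeasureTheory.Measure.finite_const_le_meas_of_disjoint_iUnion
        (MeasureTheory.volume) (ε := ENNReal.ofReal ε0)
        (ENNReal.ofReal_pos.mpr hε0pos) hmble hdisj hunion
      have huniv : {i : ↥S | ENNReal.ofReal ε0 ≤ MeasureTheory.volume (As i)} = Set.univ := by
        ext I
        simp only [Set.mem_setOf_eq, Set.mem_univ, iff_true, hAs, Real.volume_Ioo]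
        exact ENNReal.ofReal_le_ofReal (hlen (tt I) (htt I))
      rw [huniv] at hfin
      have : Finite ↥S := Set.finite_univ_iff.mp hfin
      exact Set.toFinite S
  · -- pairwise equal or disjoint
    intro t₁ h₁ t₂ h₂
    rcases Set.eq_empty_or_nonempty (It φ a b r t₁ ∩ It φ a b r t₂) with h | ⟨s, hs₁, hs₂⟩
    · exact Or.inr h
    · exact Or.inl (It_eq_of_inter hφ h₁ h₂ hs₁ hs₂)
  · -- cover
    intro t ht
    exact Set.mem_biUnion ht (t_mem_It hr hφ ht)
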